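/- (Almost permutation extension lemma.) Let K be a finite set and ε > 0. Then there is κ > 0, depending only on |K| and ε, with the following property: for every natural number d, every pair of K-tuples (B_k)_{k∈K}, (C_k)_{k∈K} of subsets of {1,…,d} satisfying |u_d(B_k) - u_d(C_k)| < κ for all k, and max(u_d(B_k ∩ B_l), u_d(C_k ∩ C_l)) < κ for all k ≠ l, and every family of functions p_k : B_k → C_k with u_d(p_k(B_k)) ≥ u_d(C_k) - κ for all k, there is a permutation p ∈ S_d such that u_d(⋃_{k∈K} {j ∈ B_k : p(j) ≠ p_k(j)}) ≤ ε. -/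
import Mathlib

open Finset

/-- Almost permutation extension lemma: given a finite index set `K` and `ε > 0`, there is
`κ > 0` (depending only on `|K|` and `ε`) such that any family of partial injections-up-to-κ
`p k : B k → C k` between κ-almost disjoint families of subsets of `{1,…,d}` of κ-close sizes,
with almost full images, can be glued into a genuine permutation `q` of `{1,…,d}` agreeing
with each `p k` on `B k` outside a set of proportion at most `ε`. -/
theorem stmt13 (K : Type*) [Fintype K] (ε : ℝ) (hε : 0 < ε) :
    ∃ κ : ℝ, 0 < κ ∧
      ∀ (d : ℕ) (B C : K → Finset (Fin d)) (p : K → Fin d → Fin d),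
        (∀ k : K, |((B k).card : ℝ) / d - ((C k).card : ℝ) / d| < κ) →
        (∀ k l : K, k ≠ l →
          (((B k ∩ B l).card : ℝ) / d < κ ∧ ((C k ∩ C l).card : ℝ) / d < κ)) →
        (∀ k : K, ∀ j ∈ B k, p k j ∈ C k) →
        (∀ k : K, ((C k).card : ℝ) / d - κ ≤ (((B k).image (p k)).card : ℝ) / d) →
        ∃ q : Equiv.Perm (Fin d),
          (Nat.card {j : Fin d // ∃ k : K, j ∈ B k ∧ q j ≠ p k j} : ℝ) / d ≤ ε := by
  classical
  set n := Fintype.card K with hn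
  set κ : ℝ := ε / (2 * ((n : ℝ) + 1) ^ 2) with hκdef
  have hκpos : 0 < κ := by positivity
  refine ⟨κ, hκpos, ?_⟩
  intro d B C p hBC hdisj hmap himg
  rcases Nat.eq_zero_or_pos d with rfl | hd
  · refine ⟨1, ?_⟩
    have : Nat.card {j : Fin 0 // ∃ k : K, j ∈ B k ∧ (1 : Equiv.Perm (Fin 0)) j ≠ p k j} = 0 := by
      simp [Nat.card_eq_fintype_card]
    rw [this]
    simp
    positivity
  have hd' : (0 : ℝ) < d := by exact_mod_cast hd
  -- Step A: choose injective sub-selections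
  have hA : ∀ k : K, ∃ B' : Finset (Fin d), B' ⊆ B k ∧ Set.InjOn (p k) ↑B' ∧
      B'.image (p k) = (B k).image (p k) := by
    intro k
    obtain ⟨s, hs, hbij⟩ := Set.exists_subset_bijOn (↑(B k) : Set (Fin d)) (p k)
    have hfin : s.Finite := (B k).finite_toSet.subset hs
    refine ⟨hfin.toFinset, ?_, ?_, ?_⟩
    · intro x hx
      exact Finset.mem_coe.mp (hs (hfin.mem_toFinset.mp hx))
    · rw [hfin.coe_toFinset]; exact hbij.injOn
    · apply Finset.coe_injective
      rw [Finset.coe_image, Finset.coe_image, hfin.coe_toFinset, hbij.image_eq]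
  choose B' hB'sub hB'inj hB'img using hA
  -- Step B: the good domains
  set D : K → Finset (Fin d) := fun k =>
    (B' k).filter (fun j => (∀ l, l ≠ k → j ∉ B l) ∧ (∀ l, l ≠ k → p k j ∉ C l)) with hDdef
  have hDsub : ∀ k, D k ⊆ B' k := fun k => filter_subset _ _
  have hDB : ∀ k, D k ⊆ B k := fun k => (hDsub k).trans (hB'sub k)
  have hDuniq : ∀ {j : Fin d} {k l : K}, j ∈ D k → j ∈ D l → k = l := by
    intro j k l hk hl
    by_contra hne
    exact (Finset.mem_filter.mp hk).2.1 l (fun h => hne h.symm) (hDB l hl)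
  set Dall : Finset (Fin d) := Finset.univ.biUnion D with hDall
  set f : Fin d → Fin d := fun j => if h : ∃ k, j ∈ D k then p h.choose j else j with hfdef
  have hf : ∀ {k : K} {j : Fin d}, j ∈ D k → f j = p k j := by
    intro k j hj
    have hex : ∃ k, j ∈ D k := ⟨k, hj⟩
    show (if h : ∃ k, j ∈ D k then p h.choose j else j) = p k j
    rw [dif_pos hex, hDuniq hex.choose_spec hj]
  have hfinj : Set.InjOn f ↑Dall := by
    intro a ha b hb hab
    obtain ⟨k, -, hak⟩ := Finset.mem_biUnion.mp (Finset.mem_coe.mp ha)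
    obtain ⟨l, -, hbl⟩ := Finset.mem_biUnion.mp (Finset.mem_coe.mp hb)
    rw [hf hak, hf hbl] at hab
    by_cases hkl : k = l
    · subst hkl
      exact hB'inj k (Finset.mem_coe.mpr (hDsub k hak)) (Finset.mem_coe.mpr (hDsub k hbl)) hab
    · exfalso
      have h1 : p k a ∈ C k := hmap k a (hDB k hak)
      have h2 : p l b ∉ C k := (Finset.mem_filter.mp hbl).2.2 k hkl
      rw [hab] at h1
      exact h2 h1
  -- Step C: build the permutation
  set T : Finset (Fin d) := Dall.image f with hT
  let φ : {x : Fin d // x ∈ Dall} → {x : Fin d // x ∈ T} :=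
    fun x => ⟨f x, Finset.mem_image_of_mem f x.2⟩
  have hbijφ : Function.Bijective φ := by
    constructor
    · intro a b h
      exact Subtype.ext (hfinj (Finset.mem_coe.mpr a.2) (Finset.mem_coe.mpr b.2)
        (congrArg Subtype.val h))
    · rintro ⟨y, hy⟩
      obtain ⟨x, hx, rfl⟩ := Finset.mem_image.mp hy
      exact ⟨⟨x, hx⟩, rfl⟩
  let e := Equiv.ofBijective φ hbijφ
  refine ⟨e.extendSubtype, ?_⟩
  have hq : ∀ j ∈ Dall, e.extendSubtype j = f j := by
    intro j hj
    rw [Equiv.extendSubtype_apply_of_mem e j hj]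
    rfl
  -- Step D: the bad set is contained in the union of B k \ D k
  set bad : Finset (Fin d) :=
    Finset.univ.filter (fun j => ∃ k : K, j ∈ B k ∧ e.extendSubtype j ≠ p k j) with hbad
  have hcard : Nat.card {j : Fin d // ∃ k : K, j ∈ B k ∧ e.extendSubtype j ≠ p k j}
      = bad.card := by
    rw [Nat.card_eq_fintype_card, Fintype.card_subtype]
  have hbadsub : bad ⊆ Finset.univ.biUnion (fun k => B k \ D k) := by
    intro j hj
    obtain ⟨k, hjB, hjne⟩ := (Finset.mem_filter.mp hj).2
    refine Finset.mem_biUnion.mpr ⟨k, Finset.mem_univ _, Finset.mem_sdiff.mpr ⟨hjB, ?_⟩⟩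
    intro hjD
    have hjDall : j ∈ Dall := Finset.mem_biUnion.mpr ⟨k, Finset.mem_univ _, hjD⟩
    exact hjne ((hq j hjDall).trans (hf hjD))
  -- Step E: cardinality bounds
  have key : ∀ k : K, ((B k \ D k).card : ℝ) / d ≤ (2 + 2 * n) * κ := by
    intro k
    -- decomposition
    have hsub : B k \ D k ⊆ (B k \ B' k)
        ∪ (Finset.univ.filter (· ≠ k)).biUnion (fun l => B k ∩ B l)
        ∪ (Finset.univ.filter (· ≠ k)).biUnion
            (fun l => (B' k).filter (fun j => p k j ∈ C l)) := by
      intro j hj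
      obtain ⟨hjB, hjD⟩ := Finset.mem_sdiff.mp hj
      by_cases hjB' : j ∈ B' k
      · have hnot : ¬ ((∀ l, l ≠ k → j ∉ B l) ∧ (∀ l, l ≠ k → p k j ∉ C l)) := by
          intro hc
          exact hjD (Finset.mem_filter.mpr ⟨hjB', hc⟩)
        rw [not_and_or] at hnot
        rcases hnot with h | h
        · push_neg at h
          obtain ⟨l, hlk, hjl⟩ := h
          exact Finset.mem_union.mpr (Or.inl (Finset.mem_union.mpr (Or.inr
            (Finset.mem_biUnion.mpr ⟨l, Finset.mem_filter.mpr ⟨Finset.mem_univ _, hlk⟩,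
              Finset.mem_inter.mpr ⟨hjB, hjl⟩⟩))))
        · push_neg at h
          obtain ⟨l, hlk, hjl⟩ := h
          exact Finset.mem_union.mpr (Or.inr
            (Finset.mem_biUnion.mpr ⟨l, Finset.mem_filter.mpr ⟨Finset.mem_univ _, hlk⟩,
              Finset.mem_filter.mpr ⟨hjB', hjl⟩⟩))
      · exact Finset.mem_union.mpr (Or.inl (Finset.mem_union.mpr (Or.inl
          (Finset.mem_sdiff.mpr ⟨hjB, hjB'⟩))))
    -- bound on the first piece
    have h1 : ((B k \ B' k).card : ℝ) / d ≤ 2 * κ := by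
      have hc : (B k \ B' k).card = (B k).card - (B' k).card := Finset.card_sdiff_of_subset (hB'sub k)
      have hle : (B' k).card ≤ (B k).card := Finset.card_le_card (hB'sub k)
      have hcR : ((B k \ B' k).card : ℝ) = ((B k).card : ℝ) - ((B' k).card : ℝ) := by
        rw [hc]; exact Nat.cast_sub hle
      have hB'card : ((B' k).card : ℝ) = (((B k).image (p k)).card : ℝ) := by
        rw [← hB'img k, Finset.card_image_of_injOn (hB'inj k)]
      have h2 := himg k
      have h3 := abs_lt.mp (hBC k)
      rw [hcR, sub_div, hB'card]
      linarith [h2, h3.2]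
    -- bound on intersections of the B's
    have h2 : ∀ l ∈ Finset.univ.filter (· ≠ k), (((B k ∩ B l).card : ℝ)) / d ≤ κ := by
      intro l hl
      have hlk : l ≠ k := by simpa using (Finset.mem_filter.mp hl).2
      have := (hdisj k l (fun h => hlk h.symm)).1
      linarith
    -- bound on the preimages of intersections of the C's
    have h3 : ∀ l ∈ Finset.univ.filter (· ≠ k),
        ((((B' k).filter (fun j => p k j ∈ C l)).card : ℝ)) / d ≤ κ := by
      intro l hl
      have hlk : l ≠ k := by simpa using (Finset.mem_filter.mp hl).2
      have hinj : (((B' k).filter (fun j => p k j ∈ C l)).card) ≤ (C k ∩ C l).card := by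
        apply Finset.card_le_card_of_injOn (p k)
        · intro j hj
          obtain ⟨hjB', hjC⟩ := Finset.mem_filter.mp hj
          exact Finset.mem_inter.mpr ⟨hmap k j (hB'sub k hjB'), hjC⟩
        · exact (hB'inj k).mono (by
            intro x hx
            exact Finset.mem_coe.mpr (Finset.filter_subset _ _ (Finset.mem_coe.mp hx)))
      have hdk := (hdisj k l (fun h => hlk h.symm)).2
      have hcast : (((B' k).filter (fun j => p k j ∈ C l)).card : ℝ)
          ≤ ((C k ∩ C l).card : ℝ) := by exact_mod_cast hinj
      calc (((B' k).filter (fun j => p k j ∈ C l)).card : ℝ) / d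
          ≤ ((C k ∩ C l).card : ℝ) / d := by gcongr
        _ ≤ κ := le_of_lt hdk
    -- combine
    have hcardle : ((B k \ D k).card : ℝ)
        ≤ ((B k \ B' k).card : ℝ)
          + (∑ l ∈ Finset.univ.filter (· ≠ k), ((B k ∩ B l).card : ℝ))
          + (∑ l ∈ Finset.univ.filter (· ≠ k),
              (((B' k).filter (fun j => p k j ∈ C l)).card : ℝ)) := by
      have hstep := Finset.card_le_card hsub
      have hu1 := Finset.card_union_le ((B k \ B' k)
        ∪ (Finset.univ.filter (· ≠ k)).biUnion (fun l => B k ∩ B l))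
        ((Finset.univ.filter (· ≠ k)).biUnion (fun l => (B' k).filter (fun j => p k j ∈ C l)))
      have hu2 := Finset.card_union_le (B k \ B' k)
        ((Finset.univ.filter (· ≠ k)).biUnion (fun l => B k ∩ B l))
      have hb1 := Finset.card_biUnion_le (s := Finset.univ.filter (· ≠ k))
        (t := fun l => B k ∩ B l)
      have hb2 := Finset.card_biUnion_le (s := Finset.univ.filter (· ≠ k))
        (t := fun l => (B' k).filter (fun j => p k j ∈ C l))
      have hnat : (B k \ D k).card ≤ (B k \ B' k).card
          + (∑ l ∈ Finset.univ.filter (· ≠ k), (B k ∩ B l).card)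
          + (∑ l ∈ Finset.univ.filter (· ≠ k),
              ((B' k).filter (fun j => p k j ∈ C l)).card) := by omega
      exact_mod_cast hnat
    have hfiltcard : ((Finset.univ.filter (· ≠ k)).card : ℝ) ≤ (n : ℝ) := by
      rw [hn]
      exact_mod_cast (by simpa using Finset.card_filter_le Finset.univ (· ≠ k) :
        (Finset.univ.filter (· ≠ k)).card ≤ Fintype.card K)
    have hsum2 : (∑ l ∈ Finset.univ.filter (· ≠ k), ((B k ∩ B l).card : ℝ)) / d
        ≤ (n : ℝ) * κ := by
      rw [Finset.sum_div]
      calc (∑ l ∈ Finset.univ.filter (· ≠ k), ((B k ∩ B l).card : ℝ) / d)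
          ≤ ∑ _l ∈ Finset.univ.filter (· ≠ k), κ := Finset.sum_le_sum h2
        _ = ((Finset.univ.filter (· ≠ k)).card : ℝ) * κ := by
            rw [Finset.sum_const, nsmul_eq_mul]
        _ ≤ (n : ℝ) * κ := mul_le_mul_of_nonneg_right hfiltcard (le_of_lt hκpos)
    have hsum3 : (∑ l ∈ Finset.univ.filter (· ≠ k),
        (((B' k).filter (fun j => p k j ∈ C l)).card : ℝ)) / d ≤ (n : ℝ) * κ := by
      rw [Finset.sum_div]
      calc (∑ l ∈ Finset.univ.filter (· ≠ k),
            (((B' k).filter (fun j => p k j ∈ C l)).card : ℝ) / d)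
          ≤ ∑ _l ∈ Finset.univ.filter (· ≠ k), κ := Finset.sum_le_sum h3
        _ = ((Finset.univ.filter (· ≠ k)).card : ℝ) * κ := by
            rw [Finset.sum_const, nsmul_eq_mul]
        _ ≤ (n : ℝ) * κ := mul_le_mul_of_nonneg_right hfiltcard (le_of_lt hκpos)
    have hdiv : ((B k \ D k).card : ℝ) / d
        ≤ (((B k \ B' k).card : ℝ)
          + (∑ l ∈ Finset.univ.filter (· ≠ k), ((B k ∩ B l).card : ℝ))
          + (∑ l ∈ Finset.univ.filter (· ≠ k),
              (((B' k).filter (fun j => p k j ∈ C l)).card : ℝ))) / d := by gcongr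
    rw [add_div, add_div] at hdiv
    linarith
  -- final aggregation
  rw [hcard]
  have hbadled : (bad.card : ℝ) ≤ ∑ k : K, ((B k \ D k).card : ℝ) := by
    have h1 : bad.card ≤ (Finset.univ.biUnion (fun k => B k \ D k)).card :=
      Finset.card_le_card hbadsub
    have h2 : (Finset.univ.biUnion (fun k => B k \ D k)).card
        ≤ ∑ k : K, (B k \ D k).card := Finset.card_biUnion_le
    exact_mod_cast h1.trans h2
  have hfinal : (bad.card : ℝ) / d ≤ (n : ℝ) * ((2 + 2 * n) * κ) := by
    calc (bad.card : ℝ) / d ≤ (∑ k : K, ((B k \ D k).card : ℝ)) / d := by gcongr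
      _ = ∑ k : K, ((B k \ D k).card : ℝ) / d := Finset.sum_div _ _ _
      _ ≤ ∑ _k : K, (2 + 2 * (n : ℝ)) * κ := Finset.sum_le_sum (fun k _ => key k)
      _ = (n : ℝ) * ((2 + 2 * n) * κ) := by
          rw [Finset.sum_const, nsmul_eq_mul, Finset.card_univ, hn]
  have hbound : (n : ℝ) * ((2 + 2 * n) * κ) ≤ ε := by
    have hX : (0 : ℝ) < 2 * ((n : ℝ) + 1) ^ 2 := by positivity
    have hnn : (n : ℝ) * (2 + 2 * n) ≤ 2 * ((n : ℝ) + 1) ^ 2 := by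
      nlinarith [Nat.cast_nonneg (α := ℝ) n]
    have hκnn : (0 : ℝ) ≤ κ := le_of_lt hκpos
    calc (n : ℝ) * ((2 + 2 * n) * κ) = ((n : ℝ) * (2 + 2 * n)) * κ := by ring
      _ ≤ (2 * ((n : ℝ) + 1) ^ 2) * κ := mul_le_mul_of_nonneg_right hnn hκnn
      _ = (2 * ((n : ℝ) + 1) ^ 2) * (ε / (2 * ((n : ℝ) + 1) ^ 2)) := by rw [hκdef]
      _ = ε := by field_simp
  linarith
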